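/- arXiv:1402.1322 — 4 statements merged into one kernel-verified Lean document; each statement's English description precedes it below -/
import Mathlib

section
/- Let G be a group and x ∈ G an element whose order is divisible by p^m·q^n for distinct primes p, q with m, n ≥ 1. Then the power graph of G contains a complete subgraph (clique) on p^m − 1 + φ(p^m·q^n) vertices, where φ is the Euler totient function; namely, the elements of ⟨x⟩ of order dividing p^m together with the elements of ⟨x⟩ of order exactly p^m·q^n form such a clique. -/
/-- The power graph of a group: distinct `a, b` adjacent iff one is a power of the other. -/
def powerGraph (G : Type*) [Group G] : SimpleGraph G :=
  SimpleGraph.fromRel (fun a b => a ∈ Subgroup.zpowers b)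

/-- The proper power graph: the power graph restricted to nontrivial elements. -/
def properPowerGraph (G : Type*) [Group G] : SimpleGraph {g : G // g ≠ 1} :=
  SimpleGraph.fromRel (fun a b => (a : G) ∈ Subgroup.zpowers (b : G))

lemma aux_isCyclic_zpowers {G : Type*} [Group G] (x : G) :
    IsCyclic (Subgroup.zpowers x) := by
  refine ⟨⟨x, Subgroup.mem_zpowers x⟩, fun y => ?_⟩
  obtain ⟨k, hk⟩ := y.2
  exact ⟨k, Subtype.ext (by simpa using hk)⟩

open Finset in
lemma aux_mem_zpowers {H : Type*} [Group H] [Fintype H] [IsCyclic H] {a b : H}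
    (h : orderOf a ∣ orderOf b) : a ∈ Subgroup.zpowers b := by
  classical
  have hb : 0 < orderOf b := orderOf_pos b
  have hle : #(Finset.univ.filter (fun c : H => c ^ orderOf b = 1)) ≤ orderOf b := IsCyclic.card_pow_eq_one_le hb
  have hzsub : (Subgroup.zpowers b : Set H).toFinset ⊆ Finset.univ.filter (fun c : H => c ^ orderOf b = 1) := by
    intro c hc
    simp only [Set.mem_toFinset, SetLike.mem_coe] at hc
    simp only [Finset.mem_filter, Finset.mem_univ, true_and]
    exact orderOf_dvd_iff_pow_eq_one.mp (orderOf_dvd_of_mem_zpowers hc)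
  have hcard : (Subgroup.zpowers b : Set H).toFinset.card = orderOf b := by
    rw [Set.toFinset_card]
    simpa using Fintype.card_zpowers (x := b)
  have hEq : (Subgroup.zpowers b : Set H).toFinset = Finset.univ.filter (fun c : H => c ^ orderOf b = 1) :=
    Finset.eq_of_subset_of_card_le hzsub (by rw [hcard]; exact hle)
  have ha : a ∈ (Finset.univ.filter (fun c : H => c ^ orderOf b = 1)) := by
    simp only [Finset.mem_filter, Finset.mem_univ, true_and]
    exact orderOf_dvd_iff_pow_eq_one.mp h
  rw [← hEq] at ha
  simpa using ha

open Finset in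
lemma aux_card_orderOf_dvd {H : Type*} [Group H] [Fintype H] [IsCyclic H] {d : ℕ}
    (hd0 : 0 < d) (hd : d ∣ Fintype.card H) :
    #(Finset.univ.filter (fun h : H => orderOf h ∣ d)) = d := by
  classical
  obtain ⟨g, hg⟩ := IsCyclic.exists_ofOrder_eq_natCard (α := H)
  rw [Nat.card_eq_fintype_card] at hg
  set a := g ^ (Fintype.card H / d) with ha_def
  have ha : orderOf a = d := by
    rw [ha_def, orderOf_pow, hg, Nat.gcd_eq_right (Nat.div_dvd_of_dvd hd),
      Nat.div_div_self hd Fintype.card_ne_zero]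
  have hle : #(Finset.univ.filter (fun h : H => orderOf h ∣ d)) ≤ d := by
    have h2 : (Finset.univ.filter (fun h : H => orderOf h ∣ d)) =
        Finset.univ.filter (fun h : H => h ^ d = 1) := by
      ext c; simp [orderOf_dvd_iff_pow_eq_one]
    rw [h2]
    exact IsCyclic.card_pow_eq_one_le hd0
  have hge : d ≤ #(Finset.univ.filter (fun h : H => orderOf h ∣ d)) := by
    have hsub : (Subgroup.zpowers a : Set H).toFinset ⊆ Finset.univ.filter (fun h : H => orderOf h ∣ d) := by
      intro c hc
      simp only [Set.mem_toFinset, SetLike.mem_coe] at hc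
      simp only [Finset.mem_filter, Finset.mem_univ, true_and]
      rw [← ha]
      exact orderOf_dvd_of_mem_zpowers hc
    calc d = (Subgroup.zpowers a : Set H).toFinset.card := by
              rw [Set.toFinset_card]
              rw [show Fintype.card ↥(↑(Subgroup.zpowers a) : Set H) = orderOf a from
                by simpa using Fintype.card_zpowers (x := a), ha]
    _ ≤ _ := Finset.card_le_card hsub
  omega

theorem stmt_1 {G : Type*} [Group G] (x : G) (p q m n : ℕ)
    (hp : p.Prime) (hq : q.Prime) (hpq : p ≠ q) (hm : 1 ≤ m) (hn : 1 ≤ n)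
    (hfin : 0 < orderOf x) (hdvd : p ^ m * q ^ n ∣ orderOf x) :
    (powerGraph G).IsClique
      {g : G | g ∈ Subgroup.zpowers x ∧
        ((orderOf g ∣ p ^ m ∧ g ≠ 1) ∨ orderOf g = p ^ m * q ^ n)} ∧
    Set.ncard {g : G | g ∈ Subgroup.zpowers x ∧
        ((orderOf g ∣ p ^ m ∧ g ≠ 1) ∨ orderOf g = p ^ m * q ^ n)} =
      p ^ m - 1 + Nat.totient (p ^ m * q ^ n) := by
  classical
  have hfinH : Finite (Subgroup.zpowers x) := by
    have : 0 < Nat.card (Subgroup.zpowers x) := by rwa [Nat.card_zpowers]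
    exact (Nat.card_pos_iff.mp this).2
  letI : Fintype (Subgroup.zpowers x) := Fintype.ofFinite _
  haveI : IsCyclic (Subgroup.zpowers x) := aux_isCyclic_zpowers x
  have hcardH : Fintype.card (Subgroup.zpowers x) = orderOf x := by
    rw [← Nat.card_eq_fintype_card, Nat.card_zpowers]
  have hpm0 : 0 < p ^ m := pow_pos hp.pos m
  have hpmq : ¬ (p ^ m * q ^ n ∣ p ^ m) := by
    intro hc
    have h1 : p ^ m * q ^ n ≤ p ^ m := Nat.le_of_dvd hpm0 hc
    have h2 : 2 ≤ q ^ n := le_trans hq.two_le (Nat.le_self_pow (by omega) q)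
    nlinarith
  -- divisibility of orders between members
  have hdvdorders : ∀ a b : G,
      ((orderOf a ∣ p ^ m ∧ a ≠ 1) ∨ orderOf a = p ^ m * q ^ n) →
      ((orderOf b ∣ p ^ m ∧ b ≠ 1) ∨ orderOf b = p ^ m * q ^ n) →
      orderOf a ∣ orderOf b ∨ orderOf b ∣ orderOf a := by
    intro a b hA hB
    rcases hA with ⟨hA, -⟩ | hA
    · rcases hB with ⟨hB, -⟩ | hB
      · obtain ⟨i, hi, hi2⟩ := (Nat.dvd_prime_pow hp).mp hA
        obtain ⟨j, hj, hj2⟩ := (Nat.dvd_prime_pow hp).mp hB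
        rw [hi2, hj2]
        rcases le_total i j with h | h
        · exact Or.inl (pow_dvd_pow p h)
        · exact Or.inr (pow_dvd_pow p h)
      · exact Or.inl (hB ▸ hA.trans (dvd_mul_right _ _))
    · rcases hB with ⟨hB, -⟩ | hB
      · exact Or.inr (hA ▸ hB.trans (dvd_mul_right _ _))
      · rw [hA, hB]; exact Or.inl dvd_rfl
  constructor
  · intro a ha b hb hne
    simp only [Set.mem_setOf_eq] at ha hb
    obtain ⟨haz, haord⟩ := ha
    obtain ⟨hbz, hbord⟩ := hb
    have key : a ∈ Subgroup.zpowers b ∨ b ∈ Subgroup.zpowers a := by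
      set a' : Subgroup.zpowers x := ⟨a, haz⟩ with ha'
      set b' : Subgroup.zpowers x := ⟨b, hbz⟩ with hb'
      have hoa : orderOf a' = orderOf a := Subgroup.orderOf_mk a haz
      have hob : orderOf b' = orderOf b := Subgroup.orderOf_mk b hbz
      rcases hdvdorders a b haord hbord with h | h
      · left
        have := aux_mem_zpowers (a := a') (b := b') (by rw [hoa, hob]; exact h)
        obtain ⟨k, hk⟩ := this
        exact ⟨k, by simpa using congrArg (Subtype.val) hk⟩
      · right
        have := aux_mem_zpowers (a := b') (b := a') (by rw [hoa, hob]; exact h)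
        obtain ⟨k, hk⟩ := this
        exact ⟨k, by simpa using congrArg (Subtype.val) hk⟩
    constructor
    · exact hne
    · rcases key with h | h
      · exact Or.inl h
      · exact Or.inr h
  · -- cardinality
    set S' : Set (Subgroup.zpowers x) :=
      {h | (orderOf h ∣ p ^ m ∧ h ≠ 1) ∨ orderOf h = p ^ m * q ^ n} with hS'
    have himg : {g : G | g ∈ Subgroup.zpowers x ∧
        ((orderOf g ∣ p ^ m ∧ g ≠ 1) ∨ orderOf g = p ^ m * q ^ n)} =
        Subtype.val '' S' := by
      ext g
      simp only [Set.mem_setOf_eq, Set.mem_image, hS']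
      constructor
      · rintro ⟨hgz, hg⟩
        refine ⟨⟨g, hgz⟩, ?_, rfl⟩
        simp only [Set.mem_setOf_eq, Subgroup.orderOf_mk]
        rcases hg with ⟨h1, h2⟩ | h1
        · exact Or.inl ⟨h1, by simpa [Subtype.ext_iff] using h2⟩
        · exact Or.inr h1
      · rintro ⟨⟨g', hg'⟩, hg, rfl⟩
        simp only [Set.mem_setOf_eq, Subgroup.orderOf_mk] at hg
        refine ⟨hg', ?_⟩
        rcases hg with ⟨h1, h2⟩ | h1
        · exact Or.inl ⟨h1, by simpa [Subtype.ext_iff] using h2⟩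
        · exact Or.inr h1
    rw [himg, Set.ncard_image_of_injective _ Subtype.val_injective]
    rw [Set.ncard_eq_toFinset_card']
    have hto : S'.toFinset = Finset.univ.filter
        (fun h : Subgroup.zpowers x =>
          (orderOf h ∣ p ^ m ∧ h ≠ 1) ∨ orderOf h = p ^ m * q ^ n) := by
      ext h; simp [hS']
    rw [hto, Finset.filter_or, Finset.card_union_of_disjoint]
    · congr 1
      · -- first part: p^m - 1
        have h1 : Finset.univ.filter
            (fun h : Subgroup.zpowers x => orderOf h ∣ p ^ m ∧ h ≠ 1) =
            (Finset.univ.filter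
              (fun h : Subgroup.zpowers x => orderOf h ∣ p ^ m)).erase 1 := by
          ext h
          simp only [Finset.mem_filter, Finset.mem_univ, true_and, Finset.mem_erase]
          tauto
        rw [h1, Finset.card_erase_of_mem (by simp),
          aux_card_orderOf_dvd hpm0 (by rw [hcardH]; exact (dvd_mul_right _ _).trans hdvd)]
      · -- second part: totient
        have := IsCyclic.card_orderOf_eq_totient (α := Subgroup.zpowers x)
          (d := p ^ m * q ^ n) (by rw [hcardH]; exact hdvd)
        convert this using 2
    · -- disjoint
      rw [Finset.disjoint_left]
      intro h hh1 hh2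
      simp only [Finset.mem_filter, Finset.mem_univ, true_and] at hh1 hh2
      exact hpmq (hh2 ▸ hh1.1)
end

section
/- If G is a group in which every element has order at most 6 (i.e., ω(G) ⊆ {1,2,3,4,5,6}), then the proper power graph P*(G) contains no clique of size 5. -/
theorem stmt_2 {G : Type*} [Group G]
    (h : ∀ g : G, 0 < orderOf g ∧ orderOf g ≤ 6) :
    ¬ ∃ s : Finset {g : G // g ≠ 1}, (properPowerGraph G).IsNClique 5 s := by
  rintro ⟨s, hclique, hcard⟩
  classical
  have hfin : ∀ g : G, ((Subgroup.zpowers g : Subgroup G) : Set G).Finite := fun g =>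
    finite_zpowers.mpr (orderOf_pos_iff.mp (h g).1)
  have hncard : ∀ g : G, ((Subgroup.zpowers g : Subgroup G) : Set G).ncard = orderOf g := by
    intro g
    rw [← Nat.card_coe_set_eq]
    exact Nat.card_zpowers g
  have hne : s.Nonempty := Finset.card_pos.mp (by omega)
  obtain ⟨z, hzs, hzmax⟩ := s.exists_max_image (fun a => orderOf (a : G)) hne
  have hadj : ∀ a ∈ s, ∀ b ∈ s, a ≠ b →
      ((a : G) ∈ Subgroup.zpowers (b : G) ∨ (b : G) ∈ Subgroup.zpowers (a : G)) := by
    intro a ha b hb hab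
    have := hclique ha hb hab
    simpa [properPowerGraph, SimpleGraph.fromRel_adj, hab] using this
  -- all elements of s lie in ⟨z⟩
  have hmem : ∀ a ∈ s, (a : G) ∈ Subgroup.zpowers (z : G) := by
    intro a ha
    by_cases hEq : a = z
    · subst hEq; exact Subgroup.mem_zpowers _
    · rcases hadj a ha z hzs hEq with h1 | h1
      · exact h1
      · have hle : (Subgroup.zpowers (z : G) : Set G) ⊆ Subgroup.zpowers (a : G) :=
          Subgroup.zpowers_le.mpr h1
        have hcardle : ((Subgroup.zpowers ((a : G)) : Subgroup G) : Set G).ncard ≤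
            ((Subgroup.zpowers ((z : G)) : Subgroup G) : Set G).ncard := by
          rw [hncard, hncard]; exact hzmax a ha
        have := Set.eq_of_subset_of_ncard_le hle hcardle (hfin _)
        rw [show (Subgroup.zpowers (z : G)) = Subgroup.zpowers (a : G) from
          SetLike.coe_injective this]
        exact Subgroup.mem_zpowers _
  -- the image of s in G
  set t : Finset G := s.image Subtype.val with ht
  have htcard : t.card = 5 := by
    rw [ht, Finset.card_image_of_injective _ Subtype.coe_injective, hcard]
  set T : Set G := ((Subgroup.zpowers (z : G) : Subgroup G) : Set G) \ {1} with hT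
  have hTfin : T.Finite := (hfin _).diff
  have htT : ↑t ⊆ T := by
    intro x hx
    simp only [ht, Finset.coe_image, Set.mem_image, Finset.mem_coe] at hx
    obtain ⟨a, ha, rfl⟩ := hx
    exact ⟨hmem a ha, a.2⟩
  have hTcard : T.ncard = orderOf (z : G) - 1 := by
    rw [hT, Set.ncard_diff_singleton_of_mem (Subgroup.one_mem _), hncard]
  have h5le : 5 ≤ T.ncard := by
    have := Set.ncard_le_ncard htT hTfin
    rwa [Set.ncard_coe_finset, htcard] at this
  have horder : orderOf (z : G) = 6 := by
    have := (h (z : G)).2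
    omega
  have hTeq : T = ↑t := by
    refine (Set.eq_of_subset_of_ncard_le htT ?_ hTfin).symm
    rw [Set.ncard_coe_finset, htcard, hTcard, horder]
  -- z^2 and z^3 are in T, hence in the clique
  have hz2 : (z : G) ^ 2 ∈ T := by
    refine ⟨Subgroup.mem_zpowers_iff.mpr ⟨(2 : ℤ), by rw [show ((2:ℤ)) = ((2:ℕ):ℤ) by norm_num, zpow_natCast]⟩, ?_⟩
    simp only [Set.mem_singleton_iff]
    intro hone
    have := orderOf_dvd_of_pow_eq_one hone
    rw [horder] at this
    omega
  have hz3 : (z : G) ^ 3 ∈ T := by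
    refine ⟨Subgroup.mem_zpowers_iff.mpr ⟨(3 : ℤ), by rw [show ((3:ℤ)) = ((3:ℕ):ℤ) by norm_num, zpow_natCast]⟩, ?_⟩
    simp only [Set.mem_singleton_iff]
    intro hone
    have := orderOf_dvd_of_pow_eq_one hone
    rw [horder] at this
    omega
  rw [hTeq] at hz2 hz3
  simp only [ht, Finset.coe_image, Set.mem_image, Finset.mem_coe] at hz2 hz3
  obtain ⟨a, ha, ha2⟩ := hz2
  obtain ⟨b, hb, hb3⟩ := hz3
  have hz23 : (z : G) ^ 2 ≠ (z : G) ^ 3 := by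
    intro hEq
    have : (z : G) ^ ((3 : ℤ) - 2) = 1 := by
      rw [zpow_sub]
      rw [show ((3:ℤ)) = ((3:ℕ):ℤ) by norm_num, show ((2:ℤ)) = ((2:ℕ):ℤ) by norm_num,
        zpow_natCast, zpow_natCast, ← hEq]
      group
    have hd := orderOf_dvd_iff_zpow_eq_one.mpr this
    rw [horder] at hd
    omega
  have hab : a ≠ b := by
    intro hEq; apply hz23; rw [← ha2, ← hb3, hEq]
  rcases hadj a ha b hb hab with hc | hc
  · -- z^2 ∈ zpowers (z^3)
    rw [ha2, hb3] at hc
    obtain ⟨k, hk⟩ := Subgroup.mem_zpowers_iff.mp hc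
    have : (z : G) ^ ((3 : ℤ) * k - 2) = 1 := by
      rw [zpow_sub, show ((2:ℤ)) = ((2:ℕ):ℤ) by norm_num, zpow_natCast, ← hk,
        show ((3:ℤ)) = ((3:ℕ):ℤ) by norm_num, zpow_mul, zpow_natCast]
      group
    have hd := orderOf_dvd_iff_zpow_eq_one.mpr this
    rw [horder] at hd
    omega
  · -- z^3 ∈ zpowers (z^2)
    rw [ha2, hb3] at hc
    obtain ⟨k, hk⟩ := Subgroup.mem_zpowers_iff.mp hc
    have : (z : G) ^ ((2 : ℤ) * k - 3) = 1 := by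
      rw [zpow_sub, show ((3:ℤ)) = ((3:ℕ):ℤ) by norm_num, zpow_natCast, ← hk,
        show ((2:ℤ)) = ((2:ℕ):ℤ) by norm_num, zpow_mul, zpow_natCast]
      group
    have hd := orderOf_dvd_iff_zpow_eq_one.mpr this
    rw [horder] at hd
    omega
end

section
/- If G is a group such that the proper power graph P*(G) contains no clique of size 5, then every element of G has finite order at most 6. -/
lemma totient_ge_four (n : ℕ) (hn : 7 ≤ n) : 4 ≤ n.totient := by
  have heven := Nat.totient_even (by omega : 2 < n)
  have h3 : 3 ≤ n.totient := by
    have hex : ∃ k, 1 < k ∧ k < n - 1 ∧ n.Coprime k := by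
      rcases Nat.even_or_odd n with he | ho
      · obtain ⟨m, rfl⟩ := he
        have key : ∀ k, 1 < k → k < m + m - 1 → Odd k →
            (Nat.gcd (m + m) k ∣ 4) → (m + m).Coprime k := by
          intro k hk1 hk2 hodd hdvd
          have hodd' : ¬ (2 ∣ k) := by rwa [Nat.two_dvd_ne_zero, ← Nat.odd_iff]
          have hle : Nat.gcd (m + m) k ≤ 4 := Nat.le_of_dvd (by norm_num) hdvd
          have hpos : 0 < Nat.gcd (m + m) k := Nat.gcd_pos_of_pos_right _ (by omega)
          have hgk := Nat.gcd_dvd_right (m + m) k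
          unfold Nat.Coprime
          interval_cases hg : Nat.gcd (m + m) k
          · rfl
          · exact absurd hgk hodd'
          · exact absurd hdvd (by norm_num)
          · exact absurd (dvd_trans (by norm_num) hgk) hodd'
        rcases Nat.even_or_odd m with hm | hm
        · refine ⟨m - 1, by omega, by omega, key _ (by omega) (by omega)
            (by obtain ⟨t, rfl⟩ := hm; exact ⟨t - 1, by omega⟩) ?_⟩
          have h1 := Nat.gcd_dvd_left (m + m) (m - 1)
          have h2 := Nat.gcd_dvd_right (m + m) (m - 1)
          have := Nat.dvd_sub h1 (Dvd.dvd.mul_left h2 2)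
          have e : m + m - 2 * (m - 1) = 2 := by omega
          rw [e] at this
          exact this.trans (by norm_num)
        · refine ⟨m - 2, by omega, by omega, key _ (by omega) (by omega)
            (by obtain ⟨t, rfl⟩ := hm; exact ⟨t - 1, by omega⟩) ?_⟩
          have h1 := Nat.gcd_dvd_left (m + m) (m - 2)
          have h2 := Nat.gcd_dvd_right (m + m) (m - 2)
          have := Nat.dvd_sub h1 (Dvd.dvd.mul_left h2 2)
          have e : m + m - 2 * (m - 2) = 4 := by omega
          rwa [e] at this
      · exact ⟨2, by omega, by omega, ho.coprime_two_right⟩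
    obtain ⟨k, hk1, hk2, hk3⟩ := hex
    have hsub : ({1, n - 1, k} : Finset ℕ) ⊆ (Finset.range n).filter n.Coprime := by
      intro x hx
      simp only [Finset.mem_insert, Finset.mem_singleton] at hx
      rcases hx with rfl | rfl | rfl <;> simp only [Finset.mem_filter, Finset.mem_range]
      · exact ⟨by omega, Nat.coprime_one_right n⟩
      · refine ⟨by omega, ?_⟩
        have hd := Nat.dvd_sub (Nat.gcd_dvd_left n (n-1)) (Nat.gcd_dvd_right n (n-1))
        have e : n - (n - 1) = 1 := by omega
        rw [e] at hd
        exact Nat.dvd_one.mp hd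
      · exact ⟨by omega, hk3⟩
    have hcard : ({1, n - 1, k} : Finset ℕ).card = 3 := by
      rw [Finset.card_insert_of_notMem (by simp; omega),
        Finset.card_insert_of_notMem (by simp; omega), Finset.card_singleton]
    calc 3 = ({1, n - 1, k} : Finset ℕ).card := hcard.symm
      _ ≤ _ := Finset.card_le_card hsub
      _ = n.totient := (Nat.totient_eq_card_coprime n).symm
  obtain ⟨k, hk⟩ := heven
  omega

lemma clique_of_five {V : Type*} (Gr : SimpleGraph V) (x : Fin 5 → V)
    (hinj : Function.Injective x) (hadj : ∀ i j, i ≠ j → Gr.Adj (x i) (x j)) :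
    ∃ s : Finset V, Gr.IsNClique 5 s := by
  classical
  refine ⟨Finset.image x Finset.univ, ?_, ?_⟩
  · intro a ha b hb hab
    simp only [Finset.coe_image, Finset.coe_univ, Set.image_univ, Set.mem_range] at ha hb
    obtain ⟨i, rfl⟩ := ha
    obtain ⟨j, rfl⟩ := hb
    exact hadj i j (fun e => hab (by rw [e]))
  · rw [Finset.card_image_of_injective _ hinj, Finset.card_univ, Fintype.card_fin]

lemma mem_zpowers_pow_of_dvd {G : Type*} [Group G] (g : G) {a b : ℕ} (h : a ∣ b) :
    g ^ b ∈ Subgroup.zpowers (g ^ a) := by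
  obtain ⟨c, rfl⟩ := h
  refine ⟨(c : ℤ), ?_⟩
  show (g ^ a) ^ (c : ℤ) = g ^ (a * c)
  rw [zpow_natCast, ← pow_mul]

theorem stmt_3 {G : Type*} [Group G]
    (h : ¬ ∃ s : Finset {g : G // g ≠ 1}, (properPowerGraph G).IsNClique 5 s) :
    ∀ g : G, 0 < orderOf g ∧ orderOf g ≤ 6 := by
  intro g
  by_contra hc
  push_neg at hc
  apply h
  rcases (by omega : orderOf g = 0 ∨ 7 ≤ orderOf g) with h0 | h7
  · -- infinite order: use g^(2^i)
    have hne1 : ∀ i : ℕ, g ^ (2 ^ i) ≠ 1 := by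
      intro i hi
      have := orderOf_dvd_of_pow_eq_one hi
      rw [h0, zero_dvd_iff] at this
      simp at this
    set x : Fin 5 → {g' : G // g' ≠ 1} := fun i => ⟨g ^ (2 ^ (i : ℕ)), hne1 _⟩ with hx
    have hpowinj : ∀ i j : ℕ, g ^ i = g ^ j → i = j := by
      intro i j hij
      have := pow_eq_pow_iff_modEq.mp hij
      rw [h0] at this
      simpa [Nat.ModEq] using this
    have hinj : Function.Injective x := by
      intro i j hij
      have h1 : g ^ (2 ^ (i : ℕ)) = g ^ (2 ^ (j : ℕ)) := congrArg Subtype.val hij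
      have h2 := hpowinj _ _ h1
      have := Nat.pow_right_injective (le_refl 2) h2
      exact Fin.ext this
    apply clique_of_five _ x hinj
    intro i j hij
    have hne : x i ≠ x j := fun e => hij (hinj e)
    rw [properPowerGraph, SimpleGraph.fromRel_adj]
    refine ⟨hne, ?_⟩
    rcases lt_or_gt_of_ne (fun e : (i:ℕ) = (j:ℕ) => hij (Fin.ext e)) with hlt | hlt
    · exact Or.inr (mem_zpowers_pow_of_dvd g (pow_dvd_pow 2 hlt.le))
    · exact Or.inl (mem_zpowers_pow_of_dvd g (pow_dvd_pow 2 hlt.le))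
  · -- finite order n ≥ 7
    set n := orderOf g with hn
    obtain ⟨T, hTsub, hTcard⟩ := Finset.exists_subset_card_eq
      ((totient_ge_four n h7).trans_eq (Nat.totient_eq_card_coprime n))
    have hTprop : ∀ k ∈ T, k < n ∧ n.Coprime k := by
      intro k hk
      have := hTsub hk
      simpa [Finset.mem_filter, Finset.mem_range] using this
    have hTpos : ∀ k ∈ T, 1 ≤ k := by
      intro k hk
      rcases Nat.eq_zero_or_pos k with rfl | hp
      · have := (hTprop 0 hk).2
        rw [Nat.coprime_zero_right] at this
        omega
      · exact hp
    have hnotsub : ¬ (Finset.Ico 1 n ⊆ T) := by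
      intro hsub
      have := Finset.card_le_card hsub
      rw [Nat.card_Ico, hTcard] at this
      omega
    obtain ⟨e, heIco, heT⟩ := Finset.not_subset.mp hnotsub
    rw [Finset.mem_Ico] at heIco
    set S : Finset ℕ := insert e T with hS
    have hScard : S.card = 5 := by
      rw [hS, Finset.card_insert_of_notMem heT, hTcard]
    have hSprop : ∀ k ∈ S, 1 ≤ k ∧ k < n := by
      intro k hk
      rw [hS, Finset.mem_insert] at hk
      rcases hk with rfl | hk
      · omega
      · exact ⟨hTpos k hk, (hTprop k hk).1⟩
    have hSne1 : ∀ k ∈ S, g ^ k ≠ 1 := by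
      intro k hk hk1
      have hd := orderOf_dvd_of_pow_eq_one hk1
      have h1 := hSprop k hk
      have h2 := Nat.le_of_dvd (by omega) hd
      omega
    set o := S.orderIsoOfFin hScard with ho
    set x : Fin 5 → {g' : G // g' ≠ 1} :=
      fun i => ⟨g ^ ((o i : ℕ)), hSne1 _ (o i).2⟩ with hx
    have hinj : Function.Injective x := by
      intro i j hij
      have h1 : g ^ ((o i : ℕ)) = g ^ ((o j : ℕ)) := congrArg Subtype.val hij
      have h2 := pow_eq_pow_iff_modEq.mp h1
      have hi := (hSprop _ (o i).2).2
      have hj := (hSprop _ (o j).2).2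
      rw [← hn] at h2
      have : (o i : ℕ) = (o j : ℕ) := by
        have := h2
        unfold Nat.ModEq at this
        rw [Nat.mod_eq_of_lt hi, Nat.mod_eq_of_lt hj] at this
        exact this
      exact o.injective (Subtype.ext this)
    have hgen : ∀ k ∈ T, ∀ y : G, y ∈ Subgroup.zpowers g → y ∈ Subgroup.zpowers (g ^ k) := by
      intro k hk y hy
      have hcop : k.Coprime (orderOf g) := ((hTprop k hk).2).symm
      obtain ⟨m, hm⟩ := exists_pow_eq_self_of_coprime hcop
      obtain ⟨c, rfl⟩ := hy
      refine ⟨(m : ℤ) * c, ?_⟩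
      show (g ^ k) ^ ((m : ℤ) * c) = g ^ c
      rw [zpow_mul, zpow_natCast, hm]
    apply clique_of_five _ x hinj
    intro i j hij
    have hne : x i ≠ x j := fun e => hij (hinj e)
    have hvalne : (o i : ℕ) ≠ (o j : ℕ) := by
      intro e
      exact hij (o.injective (Subtype.ext e))
    rw [properPowerGraph, SimpleGraph.fromRel_adj]
    refine ⟨hne, ?_⟩
    have hmemg : ∀ m : ℕ, g ^ m ∈ Subgroup.zpowers g := fun m => ⟨(m : ℤ), zpow_natCast g m⟩
    have hcases : (o i : ℕ) ∈ T ∨ (o j : ℕ) ∈ T := by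
      have h1 := (o i).2
      have h2 := (o j).2
      replace h1 := Finset.mem_insert.mp h1
      replace h2 := Finset.mem_insert.mp h2
      rcases h1 with h1 | h1
      · rcases h2 with h2 | h2
        · exact absurd (h1.trans h2.symm) hvalne
        · exact Or.inr h2
      · exact Or.inl h1
    rcases hcases with hmem | hmem
    · exact Or.inr (hgen _ hmem _ (hmemg _))
    · exact Or.inl (hgen _ hmem _ (hmemg _))
end

section
/- Let G be a group such that the proper power graph P*(G) contains no subgraph isomorphic to the complete bipartite graph K_{3,3}. Then every element of G has finite order at most 6. -/
private lemma mem_zp {G : Type*} [Group G] (g : G) (a k : ℕ) :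
    g ^ (a * k) ∈ Subgroup.zpowers (g ^ a) := by
  rw [pow_mul]; exact pow_mem (Subgroup.mem_zpowers _) k

private lemma pow_ne_pow {G : Type*} [Group G] {g : G} {n a b : ℕ}
    (hn : orderOf g = n) (ha : a < n) (hb : b < n) (hab : a ≠ b) :
    g ^ a ≠ g ^ b := by
  intro e
  have := pow_eq_pow_iff_modEq.mp e
  rw [hn, Nat.ModEq, Nat.mod_eq_of_lt ha, Nat.mod_eq_of_lt hb] at this
  exact hab this

private lemma pow_ne_one' {G : Type*} [Group G] {g : G} {n a : ℕ}
    (hn : orderOf g = n) (ha : a < n) (h0 : 0 < a) : g ^ a ≠ 1 := by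
  have := pow_ne_pow hn ha (by omega : (0:ℕ) < n) h0.ne'
  simpa using this

private lemma pow_ne_pow₀ {G : Type*} [Group G] {g : G} (hn : orderOf g = 0)
    {a b : ℕ} (hab : a ≠ b) : g ^ a ≠ g ^ b := by
  intro e
  have := pow_eq_pow_iff_modEq.mp e
  rw [hn] at this
  simp [Nat.ModEq] at this
  exact hab this

private lemma pow_ne_one₀ {G : Type*} [Group G] {g : G} (hn : orderOf g = 0)
    {a : ℕ} (h0 : a ≠ 0) : g ^ a ≠ 1 := by
  have := pow_ne_pow₀ hn (b := 0) h0
  simpa using this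

private lemma k33pow {G : Type*} [Group G]
    (hK : ¬ ∃ A B : Finset {g : G // g ≠ 1}, A.card = 3 ∧ B.card = 3 ∧
      Disjoint A B ∧ ∀ a ∈ A, ∀ b ∈ B, (properPowerGraph G).Adj a b)
    (x y : Fin 3 → G)
    (hx1 : ∀ i, x i ≠ 1) (hy1 : ∀ i, y i ≠ 1)
    (hxinj : ∀ i j, i ≠ j → x i ≠ x j)
    (hyinj : ∀ i j, i ≠ j → y i ≠ y j)
    (hxy : ∀ i j, x i ≠ y j)
    (hadj : ∀ i j, y j ∈ Subgroup.zpowers (x i)) : False := by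
  classical
  apply hK
  refine ⟨Finset.univ.image fun i => ⟨x i, hx1 i⟩,
          Finset.univ.image fun i => ⟨y i, hy1 i⟩, ?_, ?_, ?_, ?_⟩
  · rw [Finset.card_image_of_injective _ ?_]
    · simp
    · intro i j hij
      by_contra hne
      exact hxinj i j hne (congrArg Subtype.val hij)
  · rw [Finset.card_image_of_injective _ ?_]
    · simp
    · intro i j hij
      by_contra hne
      exact hyinj i j hne (congrArg Subtype.val hij)
  · rw [Finset.disjoint_left]
    intro s hs ht
    simp only [Finset.mem_image, Finset.mem_univ, true_and] at hs ht
    obtain ⟨i, hi⟩ := hs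
    obtain ⟨j, hj⟩ := ht
    exact hxy i j (by rw [← hj] at hi; exact congrArg Subtype.val hi)
  · intro a ha b hb
    simp only [Finset.mem_image, Finset.mem_univ, true_and] at ha hb
    obtain ⟨i, hi⟩ := ha
    obtain ⟨j, hj⟩ := hb
    subst hi hj
    rw [properPowerGraph, SimpleGraph.fromRel_adj]
    refine ⟨?_, Or.inr (hadj i j)⟩
    intro e
    exact hxy i j (congrArg Subtype.val e)

theorem stmt_5 {G : Type*} [Group G]
    (h : ¬ ∃ A B : Finset {g : G // g ≠ 1}, A.card = 3 ∧ B.card = 3 ∧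
      Disjoint A B ∧ ∀ a ∈ A, ∀ b ∈ B, (properPowerGraph G).Adj a b) :
    ∀ g : G, 0 < orderOf g ∧ orderOf g ≤ 6 := by
  intro g
  by_contra hc
  push_neg at hc
  rcases Nat.eq_zero_or_pos (orderOf g) with h0 | hp
  · -- infinite order: A = {g, g², g⁴}, B = {g⁸, g¹⁶, g³²}
    refine k33pow h ![g ^ 1, g ^ 2, g ^ 4] ![g ^ 8, g ^ 16, g ^ 32] ?_ ?_ ?_ ?_ ?_ ?_
    · intro i; fin_cases i <;> exact pow_ne_one₀ h0 (by norm_num)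
    · intro i; fin_cases i <;> exact pow_ne_one₀ h0 (by norm_num)
    · intro i j hij; fin_cases i <;> fin_cases j <;>
        first | (exact absurd rfl hij) | (exact pow_ne_pow₀ h0 (by norm_num))
    · intro i j hij; fin_cases i <;> fin_cases j <;>
        first | (exact absurd rfl hij) | (exact pow_ne_pow₀ h0 (by norm_num))
    · intro i j; fin_cases i <;> fin_cases j <;> exact pow_ne_pow₀ h0 (by norm_num)
    · intro i j; fin_cases i <;> fin_cases j <;>
        simp only [Matrix.cons_val_zero, Matrix.cons_val_one, Matrix.head_cons,
          Matrix.cons_val_fin_one, Matrix.cons_val_two, Matrix.tail_cons]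
      · exact (by norm_num : (8:ℕ) = 1 * 8) ▸ mem_zp g 1 8
      · exact (by norm_num : (16:ℕ) = 1 * 16) ▸ mem_zp g 1 16
      · exact (by norm_num : (32:ℕ) = 1 * 32) ▸ mem_zp g 1 32
      · exact (by norm_num : (8:ℕ) = 2 * 4) ▸ mem_zp g 2 4
      · exact (by norm_num : (16:ℕ) = 2 * 8) ▸ mem_zp g 2 8
      · exact (by norm_num : (32:ℕ) = 2 * 16) ▸ mem_zp g 2 16
      · exact (by norm_num : (8:ℕ) = 4 * 2) ▸ mem_zp g 4 2
      · exact (by norm_num : (16:ℕ) = 4 * 4) ▸ mem_zp g 4 4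
      · exact (by norm_num : (32:ℕ) = 4 * 8) ▸ mem_zp g 4 8
  · have h7 : 7 ≤ orderOf g := hc hp
    set n := orderOf g with hnn
    have hn : orderOf g = n := rfl
    have horder : g ^ n = 1 := by rw [hnn]; exact pow_orderOf_eq_one g
    -- g ∈ zpowers (g ^ 1)
    have key1 : g ∈ Subgroup.zpowers (g ^ 1) := by
      rw [pow_one]; exact Subgroup.mem_zpowers g
    -- g ∈ zpowers (g ^ (n-1))
    have keyinv : g ∈ Subgroup.zpowers (g ^ (n - 1)) := by
      have h1 := mem_zp g (n - 1) (n - 1)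
      have h2 : g ^ ((n - 1) * (n - 1)) = g := by
        have e : (n - 1) * (n - 1) = n * (n - 2) + 1 := by
          obtain ⟨m, hm⟩ : ∃ m, n = m + 7 := ⟨n - 7, by omega⟩
          rw [hm, show m + 7 - 1 = m + 6 from by omega, show m + 7 - 2 = m + 5 from by omega]
          ring
        rw [e, pow_add, pow_mul, horder, one_pow, one_mul, pow_one]
      rwa [h2] at h1
    rcases Nat.even_or_odd n with heven | hodd
    · rcases eq_or_ne n 8 with h8 | h8
      · -- n = 8 : A = {g, g⁷, g³}, B = {g², g⁴, g⁵}
        have key3 : g ∈ Subgroup.zpowers (g ^ 3) := by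
          have h1 := mem_zp g 3 3
          have h2 : g ^ (3 * 3) = g := by
            have e : 3 * 3 = n + 1 := by omega
            rw [e, pow_add, horder, one_mul, pow_one]
          rwa [h2] at h1
        have key : ∀ i, g ∈ Subgroup.zpowers (![g ^ 1, g ^ (n - 1), g ^ 3] i) := by
          intro i; fin_cases i <;> simp only [Matrix.cons_val_zero, Matrix.cons_val_one,
            Matrix.head_cons, Matrix.cons_val_two, Matrix.tail_cons]
          exacts [key1, keyinv, key3]
        refine k33pow h ![g ^ 1, g ^ (n - 1), g ^ 3] ![g ^ 2, g ^ 4, g ^ 5] ?_ ?_ ?_ ?_ ?_ ?_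
        · intro i; fin_cases i <;> exact pow_ne_one' hn (by omega) (by omega)
        · intro i; fin_cases i <;> exact pow_ne_one' hn (by omega) (by omega)
        · intro i j hij; fin_cases i <;> fin_cases j <;>
            first | (exact absurd rfl hij) | (exact pow_ne_pow hn (by omega) (by omega) (by omega))
        · intro i j hij; fin_cases i <;> fin_cases j <;>
            first | (exact absurd rfl hij) | (exact pow_ne_pow hn (by omega) (by omega) (by omega))
        · intro i j; fin_cases i <;> fin_cases j <;>
            exact pow_ne_pow hn (by omega) (by omega) (by omega)
        · intro i j; fin_cases i <;> fin_cases j <;>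
            exact pow_mem (key _) _
      · -- n even, n ≥ 10 : A = {g, g^(n-1), g²}, B = {g⁴, g⁶, g⁸}
        obtain ⟨r, hr⟩ := heven
        have h10 : 10 ≤ n := by omega
        refine k33pow h ![g ^ 1, g ^ (n - 1), g ^ 2] ![g ^ 4, g ^ 6, g ^ 8] ?_ ?_ ?_ ?_ ?_ ?_
        · intro i; fin_cases i <;> exact pow_ne_one' hn (by omega) (by omega)
        · intro i; fin_cases i <;> exact pow_ne_one' hn (by omega) (by omega)
        · intro i j hij; fin_cases i <;> fin_cases j <;>
            first | (exact absurd rfl hij) | (exact pow_ne_pow hn (by omega) (by omega) (by omega))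
        · intro i j hij; fin_cases i <;> fin_cases j <;>
            first | (exact absurd rfl hij) | (exact pow_ne_pow hn (by omega) (by omega) (by omega))
        · intro i j; fin_cases i <;> fin_cases j <;>
            exact pow_ne_pow hn (by omega) (by omega) (by omega)
        · intro i j; fin_cases i <;> fin_cases j <;>
            simp only [Matrix.cons_val_zero, Matrix.cons_val_one, Matrix.head_cons,
              Matrix.cons_val_two, Matrix.tail_cons]
          · exact pow_mem key1 4
          · exact pow_mem key1 6
          · exact pow_mem key1 8
          · exact pow_mem keyinv 4
          · exact pow_mem keyinv 6
          · exact pow_mem keyinv 8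
          · exact (by norm_num : (4:ℕ) = 2 * 2) ▸ mem_zp g 2 2
          · exact (by norm_num : (6:ℕ) = 2 * 3) ▸ mem_zp g 2 3
          · exact (by norm_num : (8:ℕ) = 2 * 4) ▸ mem_zp g 2 4
    · -- n odd, n ≥ 7 : A = {g, g^(n-1), g²}, B = {g³, g⁴, g⁵}
      obtain ⟨r, hr⟩ := hodd
      have key2 : g ∈ Subgroup.zpowers (g ^ 2) := by
        have h1 := mem_zp g 2 (r + 1)
        have h2 : g ^ (2 * (r + 1)) = g := by
          have e : 2 * (r + 1) = n + 1 := by omega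
          rw [e, pow_add, horder, one_mul, pow_one]
        rwa [h2] at h1
      have key : ∀ i, g ∈ Subgroup.zpowers (![g ^ 1, g ^ (n - 1), g ^ 2] i) := by
        intro i; fin_cases i <;> simp only [Matrix.cons_val_zero, Matrix.cons_val_one,
          Matrix.head_cons, Matrix.cons_val_two, Matrix.tail_cons]
        exacts [key1, keyinv, key2]
      refine k33pow h ![g ^ 1, g ^ (n - 1), g ^ 2] ![g ^ 3, g ^ 4, g ^ 5] ?_ ?_ ?_ ?_ ?_ ?_
      · intro i; fin_cases i <;> exact pow_ne_one' hn (by omega) (by omega)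
      · intro i; fin_cases i <;> exact pow_ne_one' hn (by omega) (by omega)
      · intro i j hij; fin_cases i <;> fin_cases j <;>
          first | (exact absurd rfl hij) | (exact pow_ne_pow hn (by omega) (by omega) (by omega))
      · intro i j hij; fin_cases i <;> fin_cases j <;>
          first | (exact absurd rfl hij) | (exact pow_ne_pow hn (by omega) (by omega) (by omega))
      · intro i j; fin_cases i <;> fin_cases j <;>
          exact pow_ne_pow hn (by omega) (by omega) (by omega)
      · intro i j; fin_cases i <;> fin_cases j <;>
          exact pow_mem (key _) _
end
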